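/- arXiv:2505.01370 — 2 statements merged into one kernel-verified Lean document; each statement's English description precedes it below -/
import Mathlib

section
/- Let A be a b×a matrix and B a c×b matrix over F₂ = ZMod 2 with B * A = 0. Given vectors z₁, …, z_k ∈ F₂^b with B.mulVec z_j = 0 whose classes form a basis of H₁ := ker(B.mulVecLin)/range(A.mulVecLin), there exist vectors x₁, …, x_k ∈ F₂^b with Aᵀ.mulVec x_i = 0 whose classes form a basis of H¹ := ker(Aᵀ.mulVecLin)/range(Bᵀ.mulVecLin) and such that x_i ⬝ᵥ z_j = δ_{ij} for all i, j; moreover the classes of x₁, …, x_k in H¹ satisfying this duality condition are unique. -/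
open Matrix

abbrev F2 := ZMod 2

/-- Degree-1 homology `ker(B.mulVecLin) / range(A.mulVecLin)`. -/
abbrev MatHomology {a b c : ℕ} (A : Matrix (Fin b) (Fin a) F2)
    (B : Matrix (Fin c) (Fin b) F2) :=
  (LinearMap.ker B.mulVecLin) ⧸
    (Submodule.comap (LinearMap.ker B.mulVecLin).subtype (LinearMap.range A.mulVecLin))

/-- Degree-1 cohomology `ker(Aᵀ.mulVecLin) / range(Bᵀ.mulVecLin)`. -/
abbrev MatCohomology {a b c : ℕ} (A : Matrix (Fin b) (Fin a) F2)
    (B : Matrix (Fin c) (Fin b) F2) :=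
  (LinearMap.ker Aᵀ.mulVecLin) ⧸
    (Submodule.comap (LinearMap.ker Aᵀ.mulVecLin).subtype (LinearMap.range Bᵀ.mulVecLin))

/-- The homology class of a `Z`-cycle `z` (a vector with `B.mulVec z = 0`). -/
def MatHomology.mk {a b c : ℕ} (A : Matrix (Fin b) (Fin a) F2)
    (B : Matrix (Fin c) (Fin b) F2) (z : Fin b → F2) (hz : B.mulVec z = 0) :
    MatHomology A B :=
  Submodule.Quotient.mk ⟨z, by rwa [LinearMap.mem_ker, Matrix.mulVecLin_apply]⟩

/-- The cohomology class of an `X`-cocycle `x` (a vector with `Aᵀ.mulVec x = 0`). -/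
def MatCohomology.mk {a b c : ℕ} (A : Matrix (Fin b) (Fin a) F2)
    (B : Matrix (Fin c) (Fin b) F2) (x : Fin b → F2) (hx : Aᵀ.mulVec x = 0) :
    MatCohomology A B :=
  Submodule.Quotient.mk ⟨x, by rwa [LinearMap.mem_ker, Matrix.mulVecLin_apply]⟩

namespace DualBasisAux

open Matrix

/-- Dot product as a linear map into the dual. -/
noncomputable def dotD (n : ℕ) : (Fin n → F2) →ₗ[F2] Module.Dual F2 (Fin n → F2) :=
  LinearMap.mk₂ F2 (· ⬝ᵥ ·) (fun x y z => add_dotProduct x y z)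
    (fun r x z => smul_dotProduct r x z) (fun x y z => dotProduct_add x y z)
    (fun r x z => dotProduct_smul r x z)

@[simp] lemma dotD_apply {n : ℕ} (x z : Fin n → F2) : dotD n x z = x ⬝ᵥ z := rfl

lemma dotD_injective (n : ℕ) : Function.Injective (dotD n) := by
  rw [← LinearMap.ker_eq_bot, LinearMap.ker_eq_bot']
  intro x hx
  funext j
  have := congrArg (· (Pi.single j 1)) hx
  simpa [dotProduct_single] using this

lemma dotD_bijective (n : ℕ) : Function.Bijective (dotD n) := by
  refine ⟨dotD_injective n, ?_⟩
  rw [← LinearMap.range_eq_top]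
  apply Submodule.eq_top_of_finrank_eq
  rw [LinearMap.finrank_range_of_inj (dotD_injective n), Subspace.dual_finrank_eq]

/-- If `x` is orthogonal to `ker B`, then `x` is in the row space of `B`. -/
lemma mem_range_transpose_of_orth {n m : ℕ} (B : Matrix (Fin m) (Fin n) F2)
    (x : Fin n → F2) (h : ∀ z, B.mulVec z = 0 → x ⬝ᵥ z = 0) :
    x ∈ LinearMap.range Bᵀ.mulVecLin := by
  have hmem : dotD n x ∈ (LinearMap.ker B.mulVecLin).dualAnnihilator := by
    rw [Submodule.mem_dualAnnihilator]
    intro z hz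
    exact h z (by rwa [LinearMap.mem_ker, Matrix.mulVecLin_apply] at hz)
  rw [← LinearMap.range_dualMap_eq_dualAnnihilator_ker] at hmem
  obtain ⟨φ, hφ⟩ := hmem
  obtain ⟨w, rfl⟩ := (dotD_bijective m).2 φ
  refine ⟨w, ?_⟩
  apply dotD_injective n
  rw [← hφ]
  ext z
  simp only [LinearMap.dualMap_apply, dotD_apply, Matrix.mulVecLin_apply,
    LinearMap.coe_comp, Function.comp_apply]
  rw [Matrix.mulVec_transpose, ← Matrix.dotProduct_mulVec]

variable {a b c : ℕ} (A : Matrix (Fin b) (Fin a) F2) (B : Matrix (Fin c) (Fin b) F2)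

/-- The raw pairing `ker Aᵀ × ker B → F₂`. -/
noncomputable def rawPair :
    (LinearMap.ker Aᵀ.mulVecLin) →ₗ[F2] (LinearMap.ker B.mulVecLin) →ₗ[F2] F2 :=
  ((dotD b).comp (LinearMap.ker Aᵀ.mulVecLin).subtype).compl₂
    (LinearMap.ker B.mulVecLin).subtype

@[simp] lemma rawPair_apply (x : LinearMap.ker Aᵀ.mulVecLin)
    (z : LinearMap.ker B.mulVecLin) :
    rawPair A B x z = (x : Fin b → F2) ⬝ᵥ (z : Fin b → F2) := rfl

lemma pair_vanish_left (x : LinearMap.ker Aᵀ.mulVecLin)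
    (z : Fin b → F2) (hz : z ∈ LinearMap.range A.mulVecLin) :
    (x : Fin b → F2) ⬝ᵥ z = 0 := by
  obtain ⟨y, rfl⟩ := hz
  have hx : Aᵀ.mulVec (x : Fin b → F2) = 0 := by
    have := x.2; rwa [LinearMap.mem_ker, Matrix.mulVecLin_apply] at this
  rw [Matrix.mulVecLin_apply, Matrix.dotProduct_mulVec, ← Matrix.mulVec_transpose, hx,
    zero_dotProduct]

lemma pair_vanish_right (w : Fin c → F2) (z : LinearMap.ker B.mulVecLin) :
    (Bᵀ.mulVec w) ⬝ᵥ (z : Fin b → F2) = 0 := by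
  have hzz : B.mulVec (z : Fin b → F2) = 0 := by
    have := z.2; rwa [LinearMap.mem_ker, Matrix.mulVecLin_apply] at this
  rw [Matrix.mulVec_transpose, ← Matrix.dotProduct_mulVec, hzz, dotProduct_zero]

/-- The induced pairing `H¹ →ₗ Dual H₁`. -/
noncomputable def pairing : MatCohomology A B →ₗ[F2] Module.Dual F2 (MatHomology A B) :=
  Submodule.liftQ _ (LinearMap.flip (Submodule.liftQ _ (rawPair A B).flip
    (by
      intro zz hzmem
      rw [Submodule.mem_comap] at hzmem
      ext x
      exact pair_vanish_left A x _ hzmem)))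
    (by
      intro x hxmem
      rw [Submodule.mem_comap] at hxmem
      obtain ⟨w, hw⟩ := hxmem
      apply Submodule.quot_hom_ext
      intro zz
      have hxv : (x : Fin b → F2) = Bᵀ.mulVec w := by
        simpa [Matrix.mulVecLin_apply, Matrix.mulVec_transpose] using hw.symm
      show (x : Fin b → F2) ⬝ᵥ (zz : Fin b → F2) = 0
      simpa [hxv] using pair_vanish_right B w zz)

@[simp] lemma pairing_mk_mk (x : Fin b → F2) (hx : Aᵀ.mulVec x = 0)
    (zz : Fin b → F2) (hzz : B.mulVec zz = 0) :
    pairing A B (MatCohomology.mk A B x hx) (MatHomology.mk A B zz hzz) = x ⬝ᵥ zz := rfl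

lemma range_le_ker (hBA : B * A = 0) : LinearMap.range A.mulVecLin ≤ LinearMap.ker B.mulVecLin := by
  rintro _ ⟨y, rfl⟩
  rw [LinearMap.mem_ker]
  simp only [Matrix.mulVecLin_apply]
  rw [Matrix.mulVec_mulVec, hBA, Matrix.zero_mulVec]

lemma rangeT_le_kerT (hBA : B * A = 0) :
    LinearMap.range Bᵀ.mulVecLin ≤ LinearMap.ker Aᵀ.mulVecLin := by
  rintro _ ⟨w, rfl⟩
  rw [LinearMap.mem_ker]
  simp only [Matrix.mulVecLin_apply]
  rw [Matrix.mulVec_mulVec, ← Matrix.transpose_mul, hBA, Matrix.transpose_zero,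
    Matrix.zero_mulVec]

lemma pairing_injective (hBA : B * A = 0) : Function.Injective (pairing A B) := by
  rw [← LinearMap.ker_eq_bot]
  rw [Submodule.eq_bot_iff]
  intro q hq
  induction q using Submodule.Quotient.induction_on with
  | H x =>
    rw [LinearMap.mem_ker] at hq
    have hx : Aᵀ.mulVec (x : Fin b → F2) = 0 := by
      have := x.2; rwa [LinearMap.mem_ker, Matrix.mulVecLin_apply] at this
    have horth : ∀ zz, B.mulVec zz = 0 → (x : Fin b → F2) ⬝ᵥ zz = 0 := by
      intro zz hzz
      have := congrArg (· (MatHomology.mk A B zz hzz)) hq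
      exact this
    have hmem := mem_range_transpose_of_orth B (x : Fin b → F2) horth
    rw [Submodule.Quotient.mk_eq_zero, Submodule.mem_comap]
    exact hmem

set_option synthInstance.maxHeartbeats 400000 in
set_option maxHeartbeats 800000 in
lemma finrank_eq (hBA : B * A = 0) :
    Module.finrank F2 (MatCohomology A B) = Module.finrank F2 (MatHomology A B) := by
  have h1 : Module.finrank F2 (MatHomology A B)
      + Module.finrank F2 (Submodule.comap (LinearMap.ker B.mulVecLin).subtype
        (LinearMap.range A.mulVecLin))
      = Module.finrank F2 (LinearMap.ker B.mulVecLin) :=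
    Submodule.finrank_quotient_add_finrank _
  have h2 : Module.finrank F2 (MatCohomology A B)
      + Module.finrank F2 (Submodule.comap (LinearMap.ker Aᵀ.mulVecLin).subtype
        (LinearMap.range Bᵀ.mulVecLin))
      = Module.finrank F2 (LinearMap.ker Aᵀ.mulVecLin) :=
    Submodule.finrank_quotient_add_finrank _
  have e1 := Submodule.comapSubtypeEquivOfLe (range_le_ker A B hBA)
  have e2 := Submodule.comapSubtypeEquivOfLe (rangeT_le_kerT A B hBA)
  have f1 : Module.finrank F2 (Submodule.comap (LinearMap.ker B.mulVecLin).subtype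
        (LinearMap.range A.mulVecLin))
      = Module.finrank F2 (LinearMap.range A.mulVecLin) := LinearEquiv.finrank_eq e1
  have f2 : Module.finrank F2 (Submodule.comap (LinearMap.ker Aᵀ.mulVecLin).subtype
        (LinearMap.range Bᵀ.mulVecLin))
      = Module.finrank F2 (LinearMap.range Bᵀ.mulVecLin) := LinearEquiv.finrank_eq e2
  rw [f1] at h1
  rw [f2] at h2
  have r1 : Module.finrank F2 (LinearMap.range B.mulVecLin)
      + Module.finrank F2 (LinearMap.ker B.mulVecLin)
      = Module.finrank F2 (Fin b → F2) := LinearMap.finrank_range_add_finrank_ker _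
  have r2 : Module.finrank F2 (LinearMap.range Aᵀ.mulVecLin)
      + Module.finrank F2 (LinearMap.ker Aᵀ.mulVecLin)
      = Module.finrank F2 (Fin b → F2) := LinearMap.finrank_range_add_finrank_ker _
  have tA : Aᵀ.rank = A.rank := Matrix.rank_transpose A
  have tB : Bᵀ.rank = B.rank := Matrix.rank_transpose B
  simp only [Matrix.rank] at tA tB
  omega

end DualBasisAux

/-- Given cycles `z₁, …, z_k` whose homology classes form a basis of
`H₁ = ker(B.mulVecLin)/range(A.mulVecLin)`, there exist cocycles `x₁, …, x_k` whose cohomology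
classes form a basis of `H¹ = ker(Aᵀ.mulVecLin)/range(Bᵀ.mulVecLin)` with `x_i ⬝ᵥ z_j = δ_{ij}`;
moreover the cohomology classes of such dual vectors are unique. -/
theorem dual_basis_exists_unique
    (a b c k : ℕ) (A : Matrix (Fin b) (Fin a) F2) (B : Matrix (Fin c) (Fin b) F2)
    (hBA : B * A = 0)
    (z : Fin k → Fin b → F2) (hz : ∀ j, B.mulVec (z j) = 0)
    (hbz : ∃ bz : Module.Basis (Fin k) F2 (MatHomology A B),
      ∀ j, bz j = MatHomology.mk A B (z j) (hz j)) :
    ∃ (x : Fin k → Fin b → F2) (hx : ∀ i, Aᵀ.mulVec (x i) = 0),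
      (∃ bx : Module.Basis (Fin k) F2 (MatCohomology A B),
        ∀ i, bx i = MatCohomology.mk A B (x i) (hx i)) ∧
      (∀ i j, x i ⬝ᵥ z j = if i = j then 1 else 0) ∧
      (∀ (x' : Fin k → Fin b → F2) (hx' : ∀ i, Aᵀ.mulVec (x' i) = 0),
        (∀ i j, x' i ⬝ᵥ z j = if i = j then 1 else 0) →
        ∀ i, MatCohomology.mk A B (x' i) (hx' i) = MatCohomology.mk A B (x i) (hx i)) := by
  classical
  obtain ⟨bz, hbzeq⟩ := hbz
  have hinj := DualBasisAux.pairing_injective A B hBA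
  have hdim : Module.finrank F2 (MatCohomology A B)
      = Module.finrank F2 (Module.Dual F2 (MatHomology A B)) := by
    rw [Subspace.dual_finrank_eq]
    exact DualBasisAux.finrank_eq A B hBA
  have hbij : Function.Bijective (DualBasisAux.pairing A B) :=
    ⟨hinj, (LinearMap.injective_iff_surjective_of_finrank_eq_finrank hdim).mp hinj⟩
  let e : MatCohomology A B ≃ₗ[F2] Module.Dual F2 (MatHomology A B) :=
    LinearEquiv.ofBijective _ hbij
  let bx : Module.Basis (Fin k) F2 (MatCohomology A B) := (bz.dualBasis).map e.symm
  have hrep : ∀ i, ∃ xi : LinearMap.ker Aᵀ.mulVecLin, Submodule.Quotient.mk xi = bx i :=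
    fun i => Submodule.Quotient.mk_surjective _ (bx i)
  choose ξ hξ using hrep
  let x : Fin k → Fin b → F2 := fun i => (ξ i : Fin b → F2)
  have hx : ∀ i, Aᵀ.mulVec (x i) = 0 := by
    intro i
    have := (ξ i).2
    rwa [LinearMap.mem_ker, Matrix.mulVecLin_apply] at this
  have hclass : ∀ i, MatCohomology.mk A B (x i) (hx i) = bx i := by
    intro i
    rw [← hξ i]
    rfl
  have hpe : ∀ q, DualBasisAux.pairing A B q = e q := fun _ => rfl
  have hebx : ∀ i, e (bx i) = bz.dualBasis i := by
    intro i
    show e ((bz.dualBasis).map e.symm i) = _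
    rw [Module.Basis.map_apply, LinearEquiv.apply_symm_apply]
  have hpair : ∀ i j, x i ⬝ᵥ z j = if i = j then 1 else 0 := by
    intro i j
    have h1 : x i ⬝ᵥ z j
        = DualBasisAux.pairing A B (MatCohomology.mk A B (x i) (hx i))
            (MatHomology.mk A B (z j) (hz j)) :=
      (DualBasisAux.pairing_mk_mk A B (x i) (hx i) (z j) (hz j)).symm
    rw [h1, hclass i, ← hbzeq j, hpe, hebx i, Module.Basis.dualBasis_apply_self]
    simp only [eq_comm]
  refine ⟨x, hx, ⟨bx, fun i => (hclass i).symm⟩, hpair, ?_⟩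
  intro x' hx' hpair' i
  apply hinj
  apply bz.ext
  intro j
  rw [hbzeq j, DualBasisAux.pairing_mk_mk, DualBasisAux.pairing_mk_mk, hpair' i j, hpair i j]
end

section
/- Let P_X be an m_X×n matrix and P_Z an m_Z×n matrix over F₂ = ZMod 2 with P_X * P_Zᵀ = 0. Set H = fromBlocks P_X 0 0 P_Z and Ω = fromBlocks 0 I_n I_n 0. Then the quotient space ker((H * Ω).mulVecLin) / range(Hᵀ.mulVecLin) is linearly isomorphic to the direct product (ker(P_X.mulVecLin) / range(P_Zᵀ.mulVecLin)) × (ker(P_Z.mulVecLin) / range(P_Xᵀ.mulVecLin)). That is, the space of logical operators of a CSS code splits as the direct sum of its degree-1 homology (Z-logical operators) and its degree-1 cohomology (X-logical operators). -/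
open Matrix

/-- The CSS-form parity check matrix `H = fromBlocks P_X 0 0 P_Z`. -/
def cssParityCheck {n mX mZ : ℕ} (PX : Matrix (Fin mX) (Fin n) F2)
    (PZ : Matrix (Fin mZ) (Fin n) F2) :
    Matrix (Fin mX ⊕ Fin mZ) (Fin n ⊕ Fin n) F2 :=
  Matrix.fromBlocks PX 0 0 PZ

/-- The symplectic form matrix `Ω = fromBlocks 0 I_n I_n 0`. -/
def symplecticForm (n : ℕ) : Matrix (Fin n ⊕ Fin n) (Fin n ⊕ Fin n) F2 :=
  Matrix.fromBlocks 0 1 1 0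

section Aux

variable {n mX mZ : ℕ} (PX : Matrix (Fin mX) (Fin n) F2) (PZ : Matrix (Fin mZ) (Fin n) F2)

lemma css_HOmega :
    cssParityCheck PX PZ * symplecticForm n =
      Matrix.fromBlocks (0 : Matrix (Fin mX) (Fin n) F2) PX PZ 0 := by
  simp [cssParityCheck, symplecticForm, Matrix.fromBlocks_multiply]

lemma css_mem_ker (v : Fin n ⊕ Fin n → F2) :
    v ∈ LinearMap.ker ((cssParityCheck PX PZ * symplecticForm n).mulVecLin) ↔
      (v ∘ Sum.inr) ∈ LinearMap.ker PX.mulVecLin ∧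
      (v ∘ Sum.inl) ∈ LinearMap.ker PZ.mulVecLin := by
  rw [LinearMap.mem_ker, LinearMap.mem_ker, LinearMap.mem_ker,
    Matrix.mulVecLin_apply, Matrix.mulVecLin_apply, Matrix.mulVecLin_apply, css_HOmega]
  conv_lhs => rw [← Sum.elim_comp_inl_inr v]
  rw [Matrix.fromBlocks_mulVec]
  constructor
  · intro hz
    constructor
    · have := congrFun hz
      funext i; simpa using this (Sum.inl i)
    · have := congrFun hz
      funext i; simpa using this (Sum.inr i)
  · rintro ⟨h1, h2⟩
    funext i
    cases i with
    | inl i => simpa using congrFun h1 i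
    | inr i => simpa using congrFun h2 i

lemma css_mem_range (w : Fin n ⊕ Fin n → F2) :
    w ∈ LinearMap.range (cssParityCheck PX PZ)ᵀ.mulVecLin ↔
      (w ∘ Sum.inl) ∈ LinearMap.range PXᵀ.mulVecLin ∧
      (w ∘ Sum.inr) ∈ LinearMap.range PZᵀ.mulVecLin := by
  have hT : (cssParityCheck PX PZ)ᵀ =
      Matrix.fromBlocks PXᵀ 0 0 PZᵀ := by
    simp [cssParityCheck, Matrix.fromBlocks_transpose]
  constructor
  · rintro ⟨u, rfl⟩
    have hu : (Matrix.fromBlocks PXᵀ 0 0 PZᵀ) *ᵥ u =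
        Sum.elim (PXᵀ *ᵥ (u ∘ Sum.inl)) (PZᵀ *ᵥ (u ∘ Sum.inr)) := by
      conv_lhs => rw [← Sum.elim_comp_inl_inr u]
      rw [Matrix.fromBlocks_mulVec]
      simp
    rw [Matrix.mulVecLin_apply, hT, hu]
    exact ⟨⟨u ∘ Sum.inl, by simp [Matrix.mulVecLin_apply, Matrix.mulVec_transpose]⟩, ⟨u ∘ Sum.inr, by simp [Matrix.mulVecLin_apply, Matrix.mulVec_transpose]⟩⟩
  · rintro ⟨⟨a, ha⟩, ⟨b, hb⟩⟩
    refine ⟨Sum.elim a b, ?_⟩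
    rw [Matrix.mulVecLin_apply, hT, Matrix.fromBlocks_mulVec]
    rw [Matrix.mulVecLin_apply] at ha hb
    funext i
    cases i with
    | inl i => simpa using congrFun ha i
    | inr i => simpa using congrFun hb i

end Aux

/-- For a CSS code (`P_X * P_Zᵀ = 0`) with parity check matrix
`H = fromBlocks P_X 0 0 P_Z` and symplectic form `Ω`, the space of logical operators
`ker((H*Ω).mulVecLin)/range(Hᵀ.mulVecLin)` is linearly isomorphic to the product of its
degree-1 homology `ker(P_X)/im(P_Zᵀ)` (Z-logicals) and degree-1 cohomology
`ker(P_Z)/im(P_Xᵀ)` (X-logicals). -/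
theorem logical_operators_split
    (n mX mZ : ℕ) (PX : Matrix (Fin mX) (Fin n) F2) (PZ : Matrix (Fin mZ) (Fin n) F2)
    (h : PX * PZᵀ = 0) :
    Nonempty (
      ((LinearMap.ker ((cssParityCheck PX PZ * symplecticForm n).mulVecLin)) ⧸
        (Submodule.comap (LinearMap.ker ((cssParityCheck PX PZ * symplecticForm n).mulVecLin)).subtype
          (LinearMap.range (cssParityCheck PX PZ)ᵀ.mulVecLin)))
      ≃ₗ[F2]
      (((LinearMap.ker PX.mulVecLin) ⧸
          (Submodule.comap (LinearMap.ker PX.mulVecLin).subtype (LinearMap.range PZᵀ.mulVecLin))) ×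
       ((LinearMap.ker PZ.mulVecLin) ⧸
          (Submodule.comap (LinearMap.ker PZ.mulVecLin).subtype (LinearMap.range PXᵀ.mulVecLin))))) := by
  classical
  set K := LinearMap.ker ((cssParityCheck PX PZ * symplecticForm n).mulVecLin) with hK
  set N₁ := Submodule.comap (LinearMap.ker PX.mulVecLin).subtype (LinearMap.range PZᵀ.mulVecLin)
  set N₂ := Submodule.comap (LinearMap.ker PZ.mulVecLin).subtype (LinearMap.range PXᵀ.mulVecLin)
  set NK := Submodule.comap K.subtype (LinearMap.range (cssParityCheck PX PZ)ᵀ.mulVecLin)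
  -- restriction maps
  let g₁ : K →ₗ[F2] LinearMap.ker PX.mulVecLin :=
    LinearMap.codRestrict _ ((LinearMap.funLeft F2 F2 Sum.inr) ∘ₗ K.subtype)
      (fun v => ((css_mem_ker PX PZ v.1).1 v.2).1)
  let g₂ : K →ₗ[F2] LinearMap.ker PZ.mulVecLin :=
    LinearMap.codRestrict _ ((LinearMap.funLeft F2 F2 Sum.inl) ∘ₗ K.subtype)
      (fun v => ((css_mem_ker PX PZ v.1).1 v.2).2)
  let f : K →ₗ[F2] ((LinearMap.ker PX.mulVecLin ⧸ N₁) × (LinearMap.ker PZ.mulVecLin ⧸ N₂)) :=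
    LinearMap.prod (N₁.mkQ ∘ₗ g₁) (N₂.mkQ ∘ₗ g₂)
  have hker : LinearMap.ker f = NK := by
    ext ⟨v, hv⟩
    simp only [LinearMap.mem_ker, f, LinearMap.prod_apply, Function.prod, Prod.mk_eq_zero,
      LinearMap.comp_apply, Submodule.Quotient.mk_eq_zero, Submodule.mkQ_apply]
    constructor
    · rintro ⟨h1, h2⟩
      simp only [NK, Submodule.mem_comap, Submodule.subtype_apply]
      exact (css_mem_range PX PZ v).2 ⟨h2, h1⟩
    · intro hmem
      have := (css_mem_range PX PZ v).1 hmem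
      exact ⟨this.2, this.1⟩
  have hsurj : Function.Surjective f := by
    rintro ⟨q₁, q₂⟩
    obtain ⟨⟨w₂, hw₂⟩, rfl⟩ := Submodule.mkQ_surjective N₁ q₁
    obtain ⟨⟨w₁, hw₁⟩, rfl⟩ := Submodule.mkQ_surjective N₂ q₂
    have hv : Sum.elim w₁ w₂ ∈ K := by
      refine (css_mem_ker PX PZ _).2 ⟨?_, ?_⟩
      · simpa using hw₂
      · simpa using hw₁
    refine ⟨⟨Sum.elim w₁ w₂, hv⟩, ?_⟩
    simp only [f, LinearMap.prod_apply, Function.prod, LinearMap.comp_apply, Submodule.mkQ_apply]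
    constructor <;> congr 1
  exact ⟨(Submodule.quotEquivOfEq NK (LinearMap.ker f) hker.symm).trans
    (f.quotKerEquivOfSurjective hsurj)⟩
end
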